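/- Let H be a separable infinite-dimensional complex Hilbert space, let E be a complex inner product space of finite dimension N ≥ 1, and let (ψ_n, φ_n)_{n ∈ ℕ} (with ψ_n ∈ H, φ_n ∈ E) be an orthonormal (Hilbert) basis of the Hilbert space H × E equipped with the product inner product. Let Θ ⊆ ℕ be a finite set of cardinality N. Then the family (ψ_n)_{n ∈ ℕ∖Θ} is a Riesz basis for H if and only if the family (φ_n)_{n ∈ Θ} is linearly independent in E. -/

import Mathlib

open scoped InnerProductSpace

private lemma mem_orthogonal_span' {F : Type*} [NormedAddCommGroup F] [InnerProductSpace ℂ F]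
    {s : Set F} {x : F} (h : ∀ y ∈ s, ⟪y, x⟫_ℂ = 0) :
    x ∈ (Submodule.span ℂ s)ᗮ := by
  rw [Submodule.mem_orthogonal]
  intro u hu
  induction hu using Submodule.span_induction with
  | mem y hy => exact h y hy
  | zero => simp
  | add a b _ _ ha hb => rw [inner_add_left, ha, hb, add_zero]
  | smul c a _ ha => rw [inner_smul_left, ha, mul_zero]

private lemma countable_of_one_le_dist {X : Type*} [MetricSpace X]
    [TopologicalSpace.SeparableSpace X] {s : Set X}
    (hs : ∀ x ∈ s, ∀ y ∈ s, x ≠ y → 1 ≤ dist x y) : s.Countable := by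
  obtain ⟨D, hDc, hDd⟩ := TopologicalSpace.exists_countable_dense X
  have key : ∀ x : s, ∃ d : X, d ∈ D ∧ dist (x : X) d < 1/2 := by
    intro x
    obtain ⟨d, hd⟩ := Metric.dense_iff.mp hDd (x : X) (1/2) (by norm_num)
    exact ⟨d, hd.2, by have := hd.1; rw [Metric.mem_ball] at this; rw [dist_comm]; exact this⟩
  choose f hfD hf using key
  haveI : Countable D := hDc.to_subtype
  have hg : Function.Injective (fun x : s => (⟨f x, hfD x⟩ : D)) := by
    intro x y hxy
    have hfe : f x = f y := congrArg Subtype.val hxy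
    by_contra hne
    have h1 : 1 ≤ dist (x : X) (y : X) := hs _ x.2 _ y.2 (fun h => hne (Subtype.ext h))
    have h2 := dist_triangle (x : X) (f x) (y : X)
    have h3 : dist (f x) (y : X) = dist (y : X) (f y) := by rw [hfe, dist_comm]
    have h4 := hf x
    have h5 := hf y
    linarith
  exact Set.countable_coe_iff.mp hg.countable

set_option maxHeartbeats 1000000 in
theorem stmt_0
    {H : Type*} [NormedAddCommGroup H] [InnerProductSpace ℂ H] [CompleteSpace H]
    [TopologicalSpace.SeparableSpace H] (hH : ¬ FiniteDimensional ℂ H)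
    {E : Type*} [NormedAddCommGroup E] [InnerProductSpace ℂ E] [FiniteDimensional ℂ E]
    (N : ℕ) (hN : 1 ≤ N) (hE : Module.finrank ℂ E = N)
    (ψ : ℕ → H) (φ : ℕ → E)
    (hON : Orthonormal ℂ (fun n : ℕ => (WithLp.equiv 2 (H × E)).symm (ψ n, φ n)))
    (hTotal : (Submodule.span ℂ
        (Set.range (fun n : ℕ => (WithLp.equiv 2 (H × E)).symm (ψ n, φ n)))).topologicalClosure
      = ⊤)
    (Θ : Finset ℕ) (hΘ : Θ.card = N) :
    (∃ (u : HilbertBasis {n : ℕ // n ∉ Θ} ℂ H) (S : H ≃L[ℂ] H),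
        ∀ n : {n : ℕ // n ∉ Θ}, S (u n) = ψ n) ↔
      LinearIndependent ℂ (fun n : Θ => φ n) := by
  classical
  set v : ℕ → WithLp 2 (H × E) := fun n : ℕ => (WithLp.equiv 2 (H × E)).symm (ψ n, φ n) with hv
  have hvf : ∀ n, (v n).fst = ψ n := fun n => rfl
  have hvs : ∀ n, (v n).snd = φ n := fun n => rfl
  have hinner : ∀ (n : ℕ) (x : WithLp 2 (H × E)),
      ⟪v n, x⟫_ℂ = ⟪ψ n, x.fst⟫_ℂ + ⟪φ n, x.snd⟫_ℂ := by
    intro n x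
    rw [WithLp.prod_inner_apply]; rfl
  have hONite : ∀ i j : ℕ, ⟪v i, v j⟫_ℂ = if i = j then 1 else 0 :=
    fun i j => orthonormal_iff_ite.mp hON i j
  constructor
  · -- Riesz basis → linear independence
    rintro ⟨u, S, hS⟩
    rw [Fintype.linearIndependent_iff]
    intro g hg
    set x : WithLp 2 (H × E) :=
      (WithLp.equiv 2 (H × E)).symm (∑ j : Θ, g j • ψ (j : ℕ), ∑ j : Θ, g j • φ (j : ℕ)) with hx
    have hxf : x.fst = ∑ j : Θ, g j • ψ (j : ℕ) := rfl
    have hxs : x.snd = 0 := by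
      have : x.snd = ∑ j : Θ, g j • φ (j : ℕ) := rfl
      rw [this, hg]
    have hxeq : x = ∑ j : Θ, g j • v (j : ℕ) := by
      rw [hx]
      have : ((∑ j : Θ, g j • ψ (j : ℕ), ∑ j : Θ, g j • φ (j : ℕ)) : H × E)
          = ∑ j : Θ, g j • (ψ (j : ℕ), φ (j : ℕ)) := by
        refine Prod.ext ?_ ?_ <;> simp [Prod.fst_sum, Prod.snd_sum]
      rw [this]
      rw [show ((WithLp.equiv 2 (H × E)).symm : H × E → WithLp 2 (H × E))
          = ⇑(WithLp.linearEquiv 2 ℂ (H × E)).symm from rfl]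
      rw [map_sum]
      refine Finset.sum_congr rfl fun j _ => ?_
      exact map_smul (WithLp.linearEquiv 2 ℂ (H × E)).symm (g j) (ψ (j : ℕ), φ (j : ℕ))
    have hxorth : ∀ n : ℕ, n ∉ Θ → ⟪v n, x⟫_ℂ = 0 := by
      intro n hn
      rw [hxeq, inner_sum]
      refine Finset.sum_eq_zero fun j _ => ?_
      rw [inner_smul_right, hONite n j, if_neg (fun h => hn (by rw [h]; exact j.2)), mul_zero]
    have hpsi : ∀ n : ℕ, n ∉ Θ → ⟪ψ n, x.fst⟫_ℂ = 0 := by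
      intro n hn
      have h0 := hxorth n hn
      rw [hinner, hxs, inner_zero_right, add_zero] at h0
      exact h0
    set T : H →L[ℂ] H := (S : H →L[ℂ] H) with hT
    set A : H →L[ℂ] H := ContinuousLinearMap.adjoint T with hA
    have hAx : A x.fst = 0 := by
      have h0 : u.repr (A x.fst) = 0 := by
        ext n
        rw [u.repr_apply_apply]
        have : ⟪u n, A x.fst⟫_ℂ = ⟪T (u n), x.fst⟫_ℂ :=
          ContinuousLinearMap.adjoint_inner_right T _ _
        rw [this]
        have hTu : T (u n) = ψ (n : ℕ) := hS n
        rw [hTu]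
        simpa using hpsi (n : ℕ) n.2
      exact u.repr.map_eq_zero_iff.mp h0
    have hid : ∀ y : H, ContinuousLinearMap.adjoint ((S.symm : H →L[ℂ] H)) (A y) = y := by
      intro y
      have hcomp : T.comp (S.symm : H →L[ℂ] H) = ContinuousLinearMap.id ℂ H := by
        ext z; simp [hT]
      have h2 := congrArg ContinuousLinearMap.adjoint hcomp
      rw [ContinuousLinearMap.adjoint_comp, ContinuousLinearMap.adjoint_id] at h2
      have h3 := congrFun (congrArg DFunLike.coe h2) y
      simpa [hA] using h3
    have hxf0 : x.fst = 0 := by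
      have := hid x.fst
      rw [hAx, map_zero] at this
      exact this.symm
    have hx0 : x = 0 := by
      rw [hx]
      have h1 : (∑ j : Θ, g j • ψ (j : ℕ)) = 0 := by rw [← hxf]; exact hxf0
      have h2 : (∑ j : Θ, g j • φ (j : ℕ)) = 0 := hg
      rw [h1, h2]
      rfl
    intro i
    have hgi : ⟪v (i : ℕ), x⟫_ℂ = g i := by
      rw [hxeq, inner_sum]
      rw [Finset.sum_eq_single i]
      · rw [inner_smul_right, hONite, if_pos rfl, mul_one]
      · intro j _ hj
        rw [inner_smul_right, hONite, if_neg (fun h => hj (Subtype.ext h.symm)), mul_zero]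
      · intro h; exact absurd (Finset.mem_univ i) h
    rw [hx0, inner_zero_right] at hgi
    exact hgi.symm
  · -- linear independence → Riesz basis
    intro hLI
    have hcard : Fintype.card Θ = Module.finrank ℂ E := by
      rw [Fintype.card_coe, hΘ, hE]
    have hspan : Submodule.span ℂ (Set.range (fun i : Θ => φ (i : ℕ))) = ⊤ :=
      hLI.span_eq_top_of_card_eq_finrank' hcard
    have hE0 : ∀ e : E, (∀ i : Θ, ⟪φ (i : ℕ), e⟫_ℂ = 0) → e = 0 := by
      intro e he
      have hmem : e ∈ Submodule.span ℂ (Set.range (fun i : Θ => φ (i : ℕ))) :=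
        hspan ▸ Submodule.mem_top
      obtain ⟨c, hc⟩ := (Submodule.mem_span_range_iff_exists_fun ℂ).mp hmem
      have h1 : ⟪∑ i : Θ, c i • φ (i : ℕ), e⟫_ℂ = 0 := by
        rw [sum_inner]
        refine Finset.sum_eq_zero fun i _ => ?_
        rw [inner_smul_left, he i, mul_zero]
      exact inner_self_eq_zero.mp (hc ▸ h1)
    set L : E →ₗ[ℂ] (Θ → ℂ) :=
      LinearMap.pi (fun i : Θ => ((innerSL ℂ (φ (i : ℕ))) : E →L[ℂ] ℂ).toLinearMap) with hL
    have hLapp : ∀ (e : E) (i : Θ), L e i = ⟪φ (i : ℕ), e⟫_ℂ := fun e i => rfl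
    have hLinj : Function.Injective L := by
      intro a b hab
      rw [← sub_eq_zero]
      refine hE0 _ fun i => ?_
      rw [inner_sub_right, ← hLapp, ← hLapp, congrFun hab i, sub_self]
    have hLsurj : Function.Surjective L := by
      have hfr : Module.finrank ℂ E = Module.finrank ℂ (Θ → ℂ) := by
        rw [Module.finrank_pi, Fintype.card_coe, hΘ, hE]
      exact (LinearMap.injective_iff_surjective_of_finrank_eq_finrank hfr).mp hLinj
    set G : Submodule ℂ (WithLp 2 (H × E)) := (Submodule.span ℂ (v '' ↑Θ))ᗮ with hG
    haveI : CompleteSpace G :=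
      (Submodule.isClosed_orthogonal _).completeSpace_coe
    have hGmem : ∀ x : WithLp 2 (H × E), x ∈ G ↔ ∀ i ∈ Θ, ⟪v i, x⟫_ℂ = 0 := by
      intro x
      constructor
      · intro hx i hi
        exact (Submodule.mem_orthogonal _ _).mp hx _ (Submodule.subset_span ⟨i, hi, rfl⟩)
      · intro h
        exact mem_orthogonal_span' (by rintro y ⟨i, hi, rfl⟩; exact h i hi)
    have hvG : ∀ n : {n : ℕ // n ∉ Θ}, v (n : ℕ) ∈ G := by
      intro n
      rw [hGmem]
      intro i hi
      rw [hONite i (n : ℕ), if_neg (fun h => n.2 (by rw [h] at hi; exact hi))]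
    set w : {n : ℕ // n ∉ Θ} → G := fun n => ⟨v (n : ℕ), hvG n⟩ with hw
    have hwON : Orthonormal ℂ w := by
      rw [orthonormal_iff_ite]
      intro i j
      have hww : ⟪w i, w j⟫_ℂ = ⟪v (i : ℕ), v (j : ℕ)⟫_ℂ := rfl
      rw [hww, hONite]
      rcases eq_or_ne i j with h | h
      · simp [h]
      · rw [if_neg (fun hc => h (Subtype.ext hc)), if_neg h]
    have hTotal' : (Submodule.span ℂ (Set.range v))ᗮ = ⊥ := by
      rw [← Submodule.topologicalClosure_eq_top_iff]
      exact hTotal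
    have hwbot : (Submodule.span ℂ (Set.range w))ᗮ = ⊥ := by
      rw [Submodule.eq_bot_iff]
      intro x hx
      have hxK : (x : WithLp 2 (H × E)) ∈ (Submodule.span ℂ (Set.range v))ᗮ := by
        apply mem_orthogonal_span'
        rintro y ⟨n, rfl⟩
        by_cases hn : n ∈ Θ
        · exact (hGmem _).mp x.2 n hn
        · exact (Submodule.mem_orthogonal _ _).mp hx (w ⟨n, hn⟩)
            (Submodule.subset_span ⟨⟨n, hn⟩, rfl⟩)
      rw [hTotal'] at hxK
      exact Subtype.ext (by simpa using hxK)
    set wB : HilbertBasis {n : ℕ // n ∉ Θ} ℂ G :=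
      HilbertBasis.mkOfOrthogonalEqBot hwON hwbot with hwB
    set T : G →L[ℂ] H :=
      ((ContinuousLinearMap.fst ℂ H E).comp
        (WithLp.prodContinuousLinearEquiv 2 ℂ H E : WithLp 2 (H × E) →L[ℂ] H × E)).comp
        (Submodule.subtypeL G) with hTdef
    have hTapp : ∀ x : G, T x = ((x : WithLp 2 (H × E))).fst := fun x => rfl
    have hker : LinearMap.ker (T : G →ₗ[ℂ] H) = ⊥ := by
      rw [LinearMap.ker_eq_bot']
      intro x hx
      have h1 : ((x : WithLp 2 (H × E))).fst = 0 := by rw [← hTapp]; exact hx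
      have h2 : ((x : WithLp 2 (H × E))).snd = 0 := by
        apply hE0
        intro i
        have h3 := (hGmem _).mp x.2 (i : ℕ) i.2
        rw [hinner, h1, inner_zero_right, zero_add] at h3
        exact h3
      apply Subtype.ext
      show (x : WithLp 2 (H × E)) = 0
      apply (WithLp.equiv 2 (H × E)).injective
      refine Prod.ext ?_ ?_
      · exact h1.trans rfl
      · exact h2.trans rfl
    have hrange : LinearMap.range (T : G →ₗ[ℂ] H) = ⊤ := by
      rw [LinearMap.range_eq_top]
      intro h
      obtain ⟨e, he⟩ := hLsurj (fun i : Θ => -⟪ψ (i : ℕ), h⟫_ℂ)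
      have hy : (WithLp.equiv 2 (H × E)).symm (h, e) ∈ G := by
        rw [hGmem]
        intro i hi
        have h1 : ⟪v i, (WithLp.equiv 2 (H × E)).symm (h, e)⟫_ℂ
            = ⟪ψ i, h⟫_ℂ + ⟪φ i, e⟫_ℂ := by
          rw [hinner]; rfl
        rw [h1]
        have h2 : ⟪φ (i : ℕ), e⟫_ℂ = -⟪ψ (i : ℕ), h⟫_ℂ := by
          rw [← hLapp e ⟨i, hi⟩, he]
        rw [h2]; ring
      exact ⟨⟨_, hy⟩, rfl⟩
    set Tiso : G ≃L[ℂ] H := ContinuousLinearEquiv.ofBijective T hker hrange with hTiso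
    -- a Hilbert basis of H indexed by {n // n ∉ Θ}
    obtain ⟨s, b0, hb0⟩ := exists_hilbertBasis ℂ H
    have hsON : Orthonormal ℂ (Subtype.val : s → H) := by
      have h := b0.orthonormal
      rwa [hb0] at h
    have hsep : ∀ x ∈ s, ∀ y ∈ s, x ≠ y → 1 ≤ dist x y := by
      intro x hx y hy hxy
      have hxy' : (⟨x, hx⟩ : s) ≠ ⟨y, hy⟩ := fun hc => hxy (congrArg Subtype.val hc)
      have hi0 : ⟪x, y⟫_ℂ = 0 := hsON.2 hxy'
      have hnx : ‖x‖ = 1 := hsON.1 ⟨x, hx⟩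
      have hny : ‖y‖ = 1 := hsON.1 ⟨y, hy⟩
      have hsq : ‖x - y‖ ^ 2 = 2 := by
        rw [@norm_sub_sq ℂ, hi0, hnx, hny]
        norm_num
      rw [dist_eq_norm]
      nlinarith [norm_nonneg (x - y)]
    have hscount : s.Countable := countable_of_one_le_dist hsep
    have hsinf : s.Infinite := by
      by_contra hfin
      rw [Set.not_infinite] at hfin
      apply hH
      haveI hfd : FiniteDimensional ℂ (Submodule.span ℂ s) :=
        FiniteDimensional.span_of_finite ℂ hfin
      have hdense : (Submodule.span ℂ s).topologicalClosure = ⊤ := by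
        have := b0.dense_span
        rwa [hb0, Subtype.range_coe] at this
      have hclosed : IsClosed ((Submodule.span ℂ s : Submodule ℂ H) : Set H) :=
        Submodule.closed_of_finiteDimensional _
      have htop : Submodule.span ℂ s = ⊤ := by
        rw [← hdense, hclosed.submodule_topologicalClosure_eq]
      haveI : FiniteDimensional ℂ (⊤ : Submodule ℂ H) := htop ▸ hfd
      exact Module.Finite.equiv (Submodule.topEquiv : (⊤ : Submodule ℂ H) ≃ₗ[ℂ] H)
    haveI := hscount.to_subtype
    haveI := hsinf.to_subtype
    haveI : Infinite {n : ℕ // n ∉ Θ} := by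
      have h1 : ((↑Θ : Set ℕ)ᶜ).Infinite := Θ.finite_toSet.infinite_compl
      haveI := h1.to_subtype
      exact Infinite.of_injective
        (fun n : ((↑Θ : Set ℕ)ᶜ : Set ℕ) => (⟨(n : ℕ), n.2⟩ : {n : ℕ // n ∉ Θ}))
        (fun a b hab => Subtype.ext (congrArg Subtype.val hab))
    obtain ⟨den1⟩ := nonempty_denumerable (↥s)
    obtain ⟨den2⟩ := nonempty_denumerable {n : ℕ // n ∉ Θ}
    let e0 : ↥s ≃ {n : ℕ // n ∉ Θ} := (@Denumerable.eqv _ den1).trans (@Denumerable.eqv _ den2).symm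
    set u0 : {n : ℕ // n ∉ Θ} → H := fun n => b0 (e0.symm n) with hu0
    have hu0ON : Orthonormal ℂ u0 := b0.orthonormal.comp _ e0.symm.injective
    have hu0span : ⊤ ≤ (Submodule.span ℂ (Set.range u0)).topologicalClosure := by
      have hr : Set.range u0 = Set.range ⇑b0 := e0.symm.surjective.range_comp ⇑b0
      rw [hr, b0.dense_span]
    set b : HilbertBasis {n : ℕ // n ∉ Θ} ℂ H := HilbertBasis.mk hu0ON hu0span with hb
    set S : H ≃L[ℂ] H :=
      (b.repr.trans wB.repr.symm).toContinuousLinearEquiv.trans Tiso with hSdef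
    refine ⟨b, S, fun n => ?_⟩
    have hUb : (b.repr.trans wB.repr.symm) (b n) = wB n := by
      rw [LinearIsometryEquiv.trans_apply, b.repr_self]
      exact wB.repr_symm_single n
    have hwBn : wB n = w n := by
      have : ⇑wB = w := HilbertBasis.coe_mkOfOrthogonalEqBot hwON hwbot
      rw [this]
    have hstep : S (b n) = Tiso (w n) := by
      show Tiso ((b.repr.trans wB.repr.symm) (b n)) = Tiso (w n)
      rw [hUb, hwBn]
    rw [hstep]
    show T (w n) = ψ (n : ℕ)
    rw [hTapp]
    exact hvf (n : ℕ)
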